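/- Let A ∈ ℝ^{n×n} be an expanding matrix and let ρ ∈ ℝ satisfy 1 < ρ < min{|η| : η a complex eigenvalue of A}. Then for every x ∈ ℝ^n the series ‖x‖′ := Σ_{k=0}^{∞} ρ^k ‖A^{−k}x‖ converges (‖·‖ the Euclidean norm), the function x ↦ ‖x‖′ is a norm on ℝ^n equivalent to the Euclidean norm, and it satisfies ‖A^{−1}x‖′ ≤ (1/ρ)‖x‖′ for all x ∈ ℝ^n. -/

import Mathlib

open Matrix

/-- A real matrix is expanding if all of its complex eigenvalues (the roots of its
characteristic polynomial over `ℂ`) have modulus strictly greater than `1`. -/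
def IsExpanding {n : ℕ} (A : Matrix (Fin n) (Fin n) ℝ) : Prop :=
  ∀ μ : ℂ, (A.charpoly.map (algebraMap ℝ ℂ)).IsRoot μ → 1 < ‖μ‖

/-- The Euclidean norm on `ℝ^n`. -/
noncomputable def euclNorm (n : ℕ) (x : Fin n → ℝ) : ℝ :=
  Real.sqrt (∑ i, x i ^ 2)

/-- The norm `‖x‖′ = Σ_{k=0}^∞ ρ^k ‖A^{-k} x‖`. -/
noncomputable def primeNorm (n : ℕ) (A : Matrix (Fin n) (Fin n) ℝ) (ρ : ℝ)
    (x : Fin n → ℝ) : ℝ :=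
  ∑' k : ℕ, ρ ^ k * euclNorm n ((A⁻¹ ^ k) *ᵥ x)

section Aux

open Polynomial Filter
open scoped ENNReal NNReal

attribute [local instance] Matrix.linftyOpNormedRing Matrix.linftyOpNormedAlgebra

lemma euclNorm_eq {n : ℕ} (x : Fin n → ℝ) :
    euclNorm n x = ‖(WithLp.equiv 2 (Fin n → ℝ)).symm x‖ := by
  rw [EuclideanSpace.norm_eq]
  simp [euclNorm, Real.norm_eq_abs, sq_abs]

lemma euclNorm_nonneg {n : ℕ} (x : Fin n → ℝ) : 0 ≤ euclNorm n x := Real.sqrt_nonneg _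

lemma euclNorm_add_le {n : ℕ} (x y : Fin n → ℝ) :
    euclNorm n (x + y) ≤ euclNorm n x + euclNorm n y := by
  simp only [euclNorm_eq]
  rw [show (WithLp.equiv 2 (Fin n → ℝ)).symm (x + y)
      = (WithLp.equiv 2 (Fin n → ℝ)).symm x + (WithLp.equiv 2 (Fin n → ℝ)).symm y from rfl]
  exact norm_add_le _ _

lemma euclNorm_smul {n : ℕ} (c : ℝ) (x : Fin n → ℝ) :
    euclNorm n (c • x) = |c| * euclNorm n x := by
  simp only [euclNorm_eq]
  rw [show (WithLp.equiv 2 (Fin n → ℝ)).symm (c • x)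
      = c • (WithLp.equiv 2 (Fin n → ℝ)).symm x from rfl]
  rw [norm_smul, Real.norm_eq_abs]

lemma euclNorm_eq_zero {n : ℕ} (x : Fin n → ℝ) : euclNorm n x = 0 ↔ x = 0 := by
  rw [euclNorm_eq, norm_eq_zero]
  constructor
  · intro h; exact (WithLp.equiv 2 (Fin n → ℝ)).symm.injective (by simpa using h)
  · rintro rfl; rfl

lemma norm_le_euclNorm {n : ℕ} (x : Fin n → ℝ) : ‖x‖ ≤ euclNorm n x := by
  rcases Nat.eq_zero_or_pos n with h | h
  · subst h; simp [euclNorm, Subsingleton.elim x 0]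
  · rw [pi_norm_le_iff_of_nonneg (euclNorm_nonneg x)]
    intro i
    rw [euclNorm, Real.norm_eq_abs, ← Real.sqrt_sq_eq_abs]
    exact Real.sqrt_le_sqrt (Finset.single_le_sum (f := fun i => x i ^ 2)
      (fun i _ => sq_nonneg _) (Finset.mem_univ i))

lemma euclNorm_le_sqrt_mul_norm {n : ℕ} (x : Fin n → ℝ) :
    euclNorm n x ≤ Real.sqrt n * ‖x‖ := by
  rw [euclNorm, ← Real.sqrt_sq (norm_nonneg x), ← Real.sqrt_mul (by positivity)]
  apply Real.sqrt_le_sqrt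
  calc ∑ i, x i ^ 2 ≤ ∑ _i : Fin n, ‖x‖ ^ 2 := by
        refine Finset.sum_le_sum fun i _ => ?_
        rw [← sq_abs]
        exact pow_le_pow_left₀ (abs_nonneg _) (norm_le_pi_norm x i) 2
    _ = n * ‖x‖ ^ 2 := by simp [mul_comm]

lemma eval_charpoly' {n : ℕ} (M : Matrix (Fin n) (Fin n) ℂ) (μ : ℂ) :
    M.charpoly.eval μ = (algebraMap ℂ (Matrix (Fin n) (Fin n) ℂ) μ - M).det := by
  rw [Matrix.charpoly, ← Polynomial.coe_evalRingHom, RingHom.map_det]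
  congr 1
  ext i j
  by_cases h : i = j <;>
    simp [h, charmatrix_apply_eq, charmatrix_apply_ne, Matrix.algebraMap_matrix_apply,
      Matrix.map_apply]

lemma isRoot_of_mem_spectrum {n : ℕ} (M : Matrix (Fin n) (Fin n) ℂ) (μ : ℂ)
    (h : μ ∈ spectrum ℂ M) : M.charpoly.IsRoot μ := by
  rw [spectrum.mem_iff] at h
  by_contra hr
  apply h
  rw [Matrix.isUnit_iff_isUnit_det, isUnit_iff_ne_zero]
  rw [Polynomial.IsRoot, eval_charpoly'] at hr
  exact hr

lemma norm_map_complex {n : ℕ} (M : Matrix (Fin n) (Fin n) ℝ) :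
    ‖M.map (algebraMap ℝ ℂ)‖ = ‖M‖ := by
  rw [Matrix.linfty_opNorm_def, Matrix.linfty_opNorm_def]
  congr 1
  apply Finset.sup_congr rfl
  intro i _
  apply Finset.sum_congr rfl
  intro j _
  simp [Matrix.map_apply, Complex.nnnorm_real]

lemma key_bound {n : ℕ} (hn : 0 < n) (A : Matrix (Fin n) (Fin n) ℝ)
    (hA : ∀ μ : ℂ, (A.charpoly.map (algebraMap ℝ ℂ)).IsRoot μ → 1 < ‖μ‖)
    (ρ : ℝ) (hρ : 1 < ρ)
    (hρlt : ∀ μ : ℂ, (A.charpoly.map (algebraMap ℝ ℂ)).IsRoot μ → ρ < ‖μ‖) :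
    ∃ c : ℕ → ℝ, Summable c ∧ (∀ k, 0 ≤ c k) ∧
      ∀ (k : ℕ) (x : Fin n → ℝ),
        ρ ^ k * euclNorm n ((A⁻¹ ^ k) *ᵥ x) ≤ c k * euclNorm n x := by
  haveI : Nonempty (Fin n) := Fin.pos_iff_nonempty.mp hn
  have hρ0 : (0:ℝ) < ρ := lt_trans one_pos hρ
  set f : ℝ →+* ℂ := algebraMap ℝ ℂ with hf
  -- determinant nonzero
  have hdet : A.det ≠ 0 := by
    intro h0
    have h2 : A.charpoly.eval 0 = 0 := by
      have := Matrix.det_eq_sign_charpoly_coeff A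
      rw [h0] at this
      rcases mul_eq_zero.mp this.symm with h | h
      · exact absurd h (by positivity)
      · rwa [Polynomial.coeff_zero_eq_eval_zero] at h
    have h1 : (A.charpoly.map f).IsRoot 0 := by
      rw [Polynomial.IsRoot, Polynomial.eval_zero_map, h2, map_zero]
    have := hA 0 h1
    norm_num at this
  have hdetU : IsUnit A.det := isUnit_iff_ne_zero.mpr hdet
  have hAA : A * A⁻¹ = 1 := Matrix.mul_nonsing_inv A hdetU
  have hAA' : A⁻¹ * A = 1 := Matrix.nonsing_inv_mul A hdetU
  -- the complexified unit
  set u : (Matrix (Fin n) (Fin n) ℂ)ˣ :=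
    ⟨A.map f, A⁻¹.map f,
      by rw [← Matrix.map_mul, hAA, Matrix.map_one f f.map_zero f.map_one],
      by rw [← Matrix.map_mul, hAA', Matrix.map_one f f.map_zero f.map_one]⟩ with hu
  set Bc : Matrix (Fin n) (Fin n) ℂ := (ρ : ℂ) • (A⁻¹.map f) with hBc
  -- spectrum of Bc is inside the open unit disk
  have hspec : ∀ z ∈ spectrum ℂ Bc, ‖z‖₊ < 1 := by
    intro z hz
    have hρℂ : (ρ : ℂ) ≠ 0 := by
      simpa using ne_of_gt hρ0
    set r : ℂˣ := Units.mk0 (ρ : ℂ) hρℂ with hr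
    set ν : ℂ := (ρ : ℂ)⁻¹ * z with hν
    have hzν : z = r • ν := by
      simp only [hν, hr, Units.smul_mk0, smul_eq_mul]
      field_simp
    have hν_mem : ν ∈ spectrum ℂ (A⁻¹.map f) := by
      have : r • ν ∈ spectrum ℂ (r • (A⁻¹.map f)) := by
        rw [← hzν]
        simpa [Units.smul_mk0, hr, hBc] using hz
      exact (spectrum.smul_mem_smul_iff (a := A⁻¹.map f) (s := ν) (r := r)).mp this
    have hν0 : ν ≠ 0 := by
      intro h0
      rw [h0] at hν_mem
      have : ¬ IsUnit (A⁻¹.map f) := (spectrum.zero_mem_iff (R := ℂ)).mp hν_mem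
      exact this ⟨u⁻¹, rfl⟩
    set w : ℂˣ := Units.mk0 ν hν0 with hw
    have hmem : (w : ℂ) ∈ spectrum ℂ
        ((u⁻¹ : (Matrix (Fin n) (Fin n) ℂ)ˣ) : Matrix (Fin n) (Fin n) ℂ) := hν_mem
    have hinv : ((w⁻¹ : ℂˣ) : ℂ) ∈ spectrum ℂ
        ((u : (Matrix (Fin n) (Fin n) ℂ)ˣ) : Matrix (Fin n) (Fin n) ℂ) := by
      have h5 := (spectrum.inv_mem_iff (r := w) (a := u⁻¹)).mp hmem
      rwa [inv_inv] at h5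
    have hroot : (A.charpoly.map f).IsRoot (ν⁻¹) := by
      have := isRoot_of_mem_spectrum _ _ hinv
      rwa [Matrix.charpoly_map] at this
    have hgt : ρ < ‖ν⁻¹‖ := hρlt _ hroot
    -- conclude ‖z‖ < 1
    have hnz : ‖z‖ = ρ * ‖ν‖ := by
      rw [hzν]
      simp [hr, Units.smul_mk0, norm_smul, Complex.norm_real, abs_of_pos hρ0]
    have hνnorm : ‖ν‖ < 1 / ρ := by
      have habs : ‖ν⁻¹‖ = ‖ν‖⁻¹ := by
        rw [norm_inv]
      rw [habs] at hgt
      have hνpos : 0 < ‖ν‖ := norm_pos_iff.mpr hν0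
      rw [lt_inv_comm₀ hρ0 hνpos] at hgt
      rwa [one_div]
    have : ‖z‖ < 1 := by
      rw [hnz]
      calc ρ * ‖ν‖ < ρ * (1 / ρ) := by
            exact mul_lt_mul_of_pos_left hνnorm hρ0
        _ = 1 := by field_simp
    exact_mod_cast this
  -- spectral radius < 1
  haveI : Nontrivial (Matrix (Fin n) (Fin n) ℂ) := Matrix.nonempty
  haveI : FiniteDimensional ℂ (Matrix (Fin n) (Fin n) ℂ) := by infer_instance
  haveI : CompleteSpace (Matrix (Fin n) (Fin n) ℂ) := FiniteDimensional.complete ℂ _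
  have hrad : spectralRadius ℂ Bc < (1 : ℝ≥0) := spectrum.spectralRadius_lt_of_forall_lt _ hspec
  obtain ⟨t, ht1, ht2⟩ := ENNReal.lt_iff_exists_nnreal_btwn.mp (by simpa using hrad)
  have ht2' : (t : ℝ) < 1 := by exact_mod_cast (by simpa using ht2 : (t : ℝ≥0) < 1)
  -- Gelfand's formula
  have hg := spectrum.pow_nnnorm_pow_one_div_tendsto_nhds_spectralRadius Bc
  have hev : ∀ᶠ k : ℕ in atTop, (‖Bc ^ k‖₊ : ℝ≥0∞) ^ (1 / (k:ℝ)) < (t : ℝ≥0∞) :=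
    hg.eventually_lt_const ht1
  obtain ⟨N, hN⟩ := eventually_atTop.mp hev
  set M0 : ℕ := max N 1 with hM0
  have hbound : ∀ k, M0 ≤ k → ‖Bc ^ k‖ ≤ (t : ℝ) ^ k := by
    intro k hk
    have hk1 : 1 ≤ k := le_trans (le_max_right N 1) hk
    have hkN : N ≤ k := le_trans (le_max_left N 1) hk
    have h1 := hN k hkN
    have hk0 : (k : ℝ) ≠ 0 := by positivity
    have h2 : ((‖Bc ^ k‖₊ : ℝ≥0∞) ^ (1 / (k:ℝ))) ^ (k : ℝ) < (t : ℝ≥0∞) ^ (k : ℝ) :=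
      ENNReal.rpow_lt_rpow h1 (by positivity)
    rw [← ENNReal.rpow_mul, one_div, inv_mul_cancel₀ hk0, ENNReal.rpow_one] at h2
    rw [ENNReal.rpow_natCast, ← ENNReal.coe_pow, ENNReal.coe_lt_coe] at h2
    have := le_of_lt h2
    exact_mod_cast this
  -- the constant sequence
  refine ⟨fun k => Real.sqrt n * ‖Bc ^ k‖, ?_, fun k => by positivity, ?_⟩
  · apply Summable.mul_left
    rw [← summable_nat_add_iff M0]
    apply Summable.of_nonneg_of_le (fun k => norm_nonneg _)
      (fun k => hbound (k + M0) (Nat.le_add_left _ _))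
    have : Summable fun k : ℕ => (t:ℝ) ^ k := summable_geometric_of_lt_one t.coe_nonneg ht2'
    have := this.mul_right ((t:ℝ) ^ M0)
    apply this.congr
    intro k
    rw [← pow_add]
  · intro k x
    have e1 : euclNorm n ((A⁻¹ ^ k) *ᵥ x) ≤ Real.sqrt n * ‖(A⁻¹ ^ k) *ᵥ x‖ :=
      euclNorm_le_sqrt_mul_norm _
    have e2 : ‖(A⁻¹ ^ k) *ᵥ x‖ ≤ ‖A⁻¹ ^ k‖ * ‖x‖ := Matrix.linfty_opNorm_mulVec _ _
    have e3 : ρ ^ k * ‖A⁻¹ ^ k‖ = ‖Bc ^ k‖ := by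
      have hmap : Bc = (ρ • A⁻¹).map f := by
        ext i j
        simp [hBc, Matrix.map_apply, Matrix.smul_apply, smul_eq_mul, hf]
      have hpow : Bc ^ k = ((ρ • A⁻¹) ^ k).map f := by
        rw [hmap, ← RingHom.mapMatrix_apply, ← map_pow, RingHom.mapMatrix_apply]
      rw [hpow, norm_map_complex, _root_.smul_pow, norm_smul,
        Real.norm_eq_abs, abs_of_pos (pow_pos hρ0 k)]
    have e4 : ‖x‖ ≤ euclNorm n x := norm_le_euclNorm x
    calc ρ ^ k * euclNorm n ((A⁻¹ ^ k) *ᵥ x)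
        ≤ ρ ^ k * (Real.sqrt n * (‖A⁻¹ ^ k‖ * ‖x‖)) := by
          apply mul_le_mul_of_nonneg_left _ (le_of_lt (pow_pos hρ0 k))
          exact le_trans e1 (by
            apply mul_le_mul_of_nonneg_left e2 (Real.sqrt_nonneg _))
      _ = Real.sqrt n * ‖Bc ^ k‖ * ‖x‖ := by rw [← e3]; ring
      _ ≤ Real.sqrt n * ‖Bc ^ k‖ * euclNorm n x := by
          apply mul_le_mul_of_nonneg_left e4 (by positivity)

end Aux

theorem stmt9 (n : ℕ) (A : Matrix (Fin n) (Fin n) ℝ) (hA : IsExpanding A)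
    (ρ : ℝ) (hρ : 1 < ρ)
    (hρlt : ∀ μ : ℂ, (A.charpoly.map (algebraMap ℝ ℂ)).IsRoot μ → ρ < ‖μ‖) :
    -- the series defining `‖·‖′` converges for every `x`
    (∀ x : Fin n → ℝ, Summable fun k : ℕ => ρ ^ k * euclNorm n ((A⁻¹ ^ k) *ᵥ x)) ∧
    -- `‖·‖′` is a norm on `ℝ^n` ...
    (∀ x : Fin n → ℝ, primeNorm n A ρ x = 0 ↔ x = 0) ∧
    (∀ x y : Fin n → ℝ, primeNorm n A ρ (x + y) ≤ primeNorm n A ρ x + primeNorm n A ρ y) ∧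
    (∀ (c : ℝ) (x : Fin n → ℝ), primeNorm n A ρ (c • x) = |c| * primeNorm n A ρ x) ∧
    -- ... equivalent to the Euclidean norm
    (∃ C₁ > (0 : ℝ), ∃ C₂ > (0 : ℝ), ∀ x : Fin n → ℝ,
      C₁ * euclNorm n x ≤ primeNorm n A ρ x ∧ primeNorm n A ρ x ≤ C₂ * euclNorm n x) ∧
    -- and it satisfies `‖A⁻¹ x‖′ ≤ (1/ρ) ‖x‖′`
    (∀ x : Fin n → ℝ, primeNorm n A ρ (A⁻¹ *ᵥ x) ≤ (1 / ρ) * primeNorm n A ρ x) := by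
  have hρ0 : (0:ℝ) < ρ := lt_trans one_pos hρ
  rcases Nat.eq_zero_or_pos n with hn | hn
  · -- trivial case `n = 0`
    subst hn
    have he : ∀ x : Fin 0 → ℝ, euclNorm 0 x = 0 := fun x => by simp [euclNorm]
    have hp : ∀ x : Fin 0 → ℝ, primeNorm 0 A ρ x = 0 := fun x => by
      simp [primeNorm, he]
    refine ⟨fun x => ?_, fun x => ?_, fun x y => ?_, fun c x => ?_,
      ⟨1, one_pos, 1, one_pos, fun x => ?_⟩, fun x => ?_⟩
    · exact summable_zero.congr fun k => by rw [he]; ring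
    · constructor
      · intro _; exact Subsingleton.elim x 0
      · intro _; exact hp x
    · rw [hp, hp, hp]; norm_num
    · rw [hp, hp]; ring
    · rw [hp, he]; norm_num
    · rw [hp, hp]; simp
  -- main case `n > 0`
  obtain ⟨c, hc_sum, hc_nonneg, hc⟩ := key_bound hn A hA ρ hρ hρlt
  have hterm_nonneg : ∀ (x : Fin n → ℝ) (k : ℕ),
      0 ≤ ρ ^ k * euclNorm n ((A⁻¹ ^ k) *ᵥ x) := fun x k =>
    mul_nonneg (pow_nonneg hρ0.le k) (euclNorm_nonneg _)
  have hsum : ∀ x : Fin n → ℝ, Summable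
      (fun k : ℕ => ρ ^ k * euclNorm n ((A⁻¹ ^ k) *ᵥ x)) := fun x =>
    Summable.of_nonneg_of_le (hterm_nonneg x) (fun k => hc k x) (hc_sum.mul_right _)
  have hlow : ∀ x : Fin n → ℝ, euclNorm n x ≤ primeNorm n A ρ x := fun x => by
    have := Summable.le_tsum (hsum x) 0 (fun k _ => hterm_nonneg x k)
    rw [primeNorm]
    simpa only [pow_zero, Matrix.one_mulVec, one_mul] using this
  have hup : ∀ x : Fin n → ℝ, primeNorm n A ρ x ≤ (∑' k, c k) * euclNorm n x := fun x => by
    rw [primeNorm]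
    calc (∑' k : ℕ, ρ ^ k * euclNorm n ((A⁻¹ ^ k) *ᵥ x))
        ≤ ∑' k : ℕ, c k * euclNorm n x :=
          Summable.tsum_le_tsum (fun k => hc k x) (hsum x) (hc_sum.mul_right _)
      _ = (∑' k, c k) * euclNorm n x := tsum_mul_right
  refine ⟨hsum, fun x => ?_, fun x y => ?_, fun c₀ x => ?_,
    ⟨1, one_pos, (∑' k, c k) + 1, ?_, fun x => ?_⟩, fun x => ?_⟩
  · constructor
    · intro h
      have h1 := hlow x
      rw [h] at h1
      have h2 : euclNorm n x = 0 := le_antisymm h1 (euclNorm_nonneg x)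
      exact (euclNorm_eq_zero x).mp h2
    · rintro rfl
      have : ∀ k : ℕ, ρ ^ k * euclNorm n ((A⁻¹ ^ k) *ᵥ (0 : Fin n → ℝ)) = 0 := fun k => by
        rw [Matrix.mulVec_zero, (euclNorm_eq_zero (0 : Fin n → ℝ)).mpr rfl]; ring
      rw [primeNorm, tsum_congr this, tsum_zero]
  · rw [primeNorm, primeNorm, primeNorm, ← Summable.tsum_add (hsum x) (hsum y)]
    apply Summable.tsum_le_tsum _ (hsum (x + y)) ((hsum x).add (hsum y))
    intro k
    rw [Matrix.mulVec_add, ← mul_add]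
    exact mul_le_mul_of_nonneg_left (euclNorm_add_le _ _) (pow_nonneg hρ0.le k)
  · rw [primeNorm, primeNorm, ← tsum_mul_left]
    apply tsum_congr
    intro k
    rw [Matrix.mulVec_smul, euclNorm_smul]
    ring
  · have : (0:ℝ) ≤ ∑' k, c k := tsum_nonneg hc_nonneg
    linarith
  · refine ⟨by rw [one_mul]; exact hlow x, ?_⟩
    have h1 := hup x
    have h2 : (∑' k, c k) * euclNorm n x ≤ ((∑' k, c k) + 1) * euclNorm n x :=
      mul_le_mul_of_nonneg_right (by linarith) (euclNorm_nonneg x)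
    linarith
  · have h1 : ∀ k : ℕ, ρ ^ k * euclNorm n ((A⁻¹ ^ k) *ᵥ (A⁻¹ *ᵥ x))
        = (1 / ρ) * (ρ ^ (k + 1) * euclNorm n ((A⁻¹ ^ (k + 1)) *ᵥ x)) := by
      intro k
      rw [Matrix.mulVec_mulVec, ← pow_succ, pow_succ]
      field_simp
      ring
    rw [primeNorm, primeNorm, tsum_congr h1, tsum_mul_left]
    have h3 := Summable.tsum_eq_zero_add (hsum x)
    have h2 : (∑' k : ℕ, ρ ^ (k + 1) * euclNorm n ((A⁻¹ ^ (k + 1)) *ᵥ x))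
        ≤ ∑' k : ℕ, ρ ^ k * euclNorm n ((A⁻¹ ^ k) *ᵥ x) := by
      rw [h3]
      have := hterm_nonneg x 0
      linarith
    exact mul_le_mul_of_nonneg_left h2 (by positivity)
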